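/- Let n, p ≥ 1, let x_i ∈ ℝ^p for i = 1,…,n, y ∈ ℝ^n, λ ≥ 0, and let b : ℝ → ℝ be differentiable with derivative μ = b′. If β̂ is a local minimizer of the lasso objective L(β) = −(1/n)∑_{i=1}^n {y_i x_iᵀβ − b(x_iᵀβ)} + λ‖β‖₁, then (1/n) max_{1≤j≤p} |∑_{i=1}^n x_{ij}(y_i − μ(x_iᵀβ̂))| ≤ λ, i.e. β̂ belongs to the feasible set of the generalized Dantzig selector with parameter λ. -/

import Mathlib

open Filter Topology

private lemma aux_abs_deriv_le (h : ℝ → ℝ) (d lam : ℝ) (hd : HasDerivAt h d 0)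
    (hineq : ∀ᶠ t in 𝓝 (0:ℝ), h 0 ≤ h t + lam * |t|) : |d| ≤ lam := by
  have hs := hasDerivAt_iff_tendsto_slope.mp hd
  rw [abs_le]
  constructor
  · have hs' : Tendsto (slope h 0) (𝓝[>] (0:ℝ)) (𝓝 d) :=
      hs.mono_left (nhdsWithin_mono 0 (fun t ht => ne_of_gt ht))
    refine ge_of_tendsto hs' ?_
    filter_upwards [self_mem_nhdsWithin, hineq.filter_mono nhdsWithin_le_nhds] with t ht hq
    have ht' : (0:ℝ) < t := ht
    have habs : |t| = t := abs_of_pos ht'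
    rw [habs] at hq
    have : -lam * t ≤ h t - h 0 := by linarith
    rw [slope_def_field, sub_zero]
    exact (le_div_iff₀ ht').mpr this
  · have hs' : Tendsto (slope h 0) (𝓝[<] (0:ℝ)) (𝓝 d) :=
      hs.mono_left (nhdsWithin_mono 0 (fun t ht => ne_of_lt ht))
    refine le_of_tendsto hs' ?_
    filter_upwards [self_mem_nhdsWithin, hineq.filter_mono nhdsWithin_le_nhds] with t ht hq
    have ht' : t < (0:ℝ) := ht
    have habs : |t| = -t := abs_of_neg ht'
    rw [habs] at hq
    have : lam * t ≤ h t - h 0 := by linarith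
    rw [slope_def_field, sub_zero]
    exact (div_le_iff_of_neg ht').mpr this

/-- A local minimizer of the GLM lasso objective
`L(β) = −(1/n)∑ᵢ {yᵢ xᵢᵀβ − b(xᵢᵀβ)} + λ‖β‖₁` belongs to the feasible set of
the generalized Dantzig selector with the same parameter `λ`:
`(1/n) max_j |∑ᵢ xᵢⱼ (yᵢ − μ(xᵢᵀβ̂))| ≤ λ`, where `μ = b′`. -/
theorem stmt_7 (n p : ℕ) (hn : 1 ≤ n) (hp : 1 ≤ p)
    (x : Fin n → Fin p → ℝ) (y : Fin n → ℝ) (lam : ℝ) (hlam : 0 ≤ lam)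
    (b μ : ℝ → ℝ) (hb : ∀ t, HasDerivAt b (μ t) t)
    (βhat : Fin p → ℝ)
    (hmin : IsLocalMin
      (fun β : Fin p → ℝ =>
        -(1 / (n : ℝ)) * ∑ i, (y i * ∑ j, x i j * β j - b (∑ j, x i j * β j)) +
          lam * ∑ j, |β j|)
      βhat) :
    ∀ j, (1 / (n : ℝ)) * |∑ i, x i j * (y i - μ (∑ j', x i j' * βhat j'))| ≤ lam := by
  intro j
  set a : Fin n → ℝ := fun i => x i j with ha
  set u : Fin n → ℝ := fun i => ∑ j', x i j' * βhat j' with hu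
  set h : ℝ → ℝ := fun t =>
    -(1 / (n : ℝ)) * ∑ i, (y i * (u i + t * a i) - b (u i + t * a i)) with hh
  set d : ℝ := -(1 / (n : ℝ)) * ∑ i, (y i * a i - μ (u i) * a i) with hdd
  have hd : HasDerivAt h d 0 := by
    apply HasDerivAt.const_mul
    apply HasDerivAt.fun_sum
    intro i _
    have hin : HasDerivAt (fun t : ℝ => u i + t * a i) (a i) 0 := by
      simpa using (hasDerivAt_mul_const (a i)).const_add (u i)
    have hcomp : HasDerivAt (fun t : ℝ => b (u i + t * a i)) (μ (u i) * a i) 0 := by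
      have := (hb (u i + 0 * a i)).comp 0 hin
      simpa [Function.comp_def] using this
    exact (hin.const_mul (y i)).sub hcomp
  -- path : t ↦ βhat + t e_j
  set g : ℝ → (Fin p → ℝ) := fun t j' => βhat j' + if j' = j then t else 0 with hgg
  have hgc : Continuous g := by
    apply continuous_pi
    intro j'
    apply continuous_const.add
    by_cases hj : j' = j <;> simp [hj] <;> fun_prop
  have hg : Tendsto g (𝓝 0) (𝓝 βhat) := by
    have := hgc.tendsto 0
    convert this using 2
    ext j'
    simp [hgg]
  have hsum : ∀ (i : Fin n) (t : ℝ),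
      ∑ j', x i j' * g t j' = u i + t * a i := by
    intro i t
    simp only [hgg, mul_add, Finset.sum_add_distrib]
    congr 1
    rw [Finset.sum_congr rfl (fun j' _ => by rw [mul_ite, mul_zero]),
      Finset.sum_ite_eq' Finset.univ j (fun j' => x i j' * t)]
    simp [ha, mul_comm]
  have habs : ∀ t : ℝ, ∑ j', |g t j'| ≤ (∑ j', |βhat j'|) + |t| := by
    intro t
    calc ∑ j', |g t j'| ≤ ∑ j', (|βhat j'| + |if j' = j then t else 0|) :=
          Finset.sum_le_sum fun j' _ => abs_add_le _ _
      _ = (∑ j', |βhat j'|) + |t| := by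
          rw [Finset.sum_add_distrib]
          congr 1
          rw [Finset.sum_congr rfl (fun j' _ => by rw [apply_ite abs, abs_zero]),
            Finset.sum_ite_eq' Finset.univ j (fun _ => |t|)]
          simp
  have hineq : ∀ᶠ t in 𝓝 (0:ℝ), h 0 ≤ h t + lam * |t| := by
    filter_upwards [hg.eventually hmin] with t hq
    simp only [hsum] at hq
    have h0 : h 0 = -(1 / (n : ℝ)) * ∑ i, (y i * u i - b (u i)) := by
      simp [hh]
    have hbh : (fun i => y i * u i - b (u i)) = fun i => y i * ∑ j', x i j' * βhat j' -
        b (∑ j', x i j' * βhat j') := by rfl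
    have ht := habs t
    have hq' : -(1 / (n : ℝ)) * ∑ i, (y i * u i - b (u i)) + lam * ∑ j', |βhat j'| ≤
        h t + lam * ∑ j', |g t j'| := by
      simpa [hh, hu] using hq
    have hmul : lam * ∑ j', |g t j'| ≤ lam * ((∑ j', |βhat j'|) + |t|) :=
      mul_le_mul_of_nonneg_left ht hlam
    rw [h0]
    nlinarith [hq', hmul]
  have := aux_abs_deriv_le h d lam hd hineq
  have hrw : ∑ i, x i j * (y i - μ (∑ j', x i j' * βhat j')) =
      ∑ i, (y i * a i - μ (u i) * a i) :=
    Finset.sum_congr rfl fun i _ => by simp [ha, hu]; ring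
  rw [hrw]
  have hn0 : (0:ℝ) ≤ 1 / (n : ℝ) := by positivity
  calc (1 / (n : ℝ)) * |∑ i, (y i * a i - μ (u i) * a i)| = |d| := by
        rw [hdd, abs_mul, abs_neg, abs_of_nonneg hn0]
    _ ≤ lam := this
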